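/- If L ∈ ℝ^{n×n} satisfies L·1_n = 0 and L has a simple eigenvalue 0 with all other eigenvalues having positive real part, then all eigenvalues of Q·L·Qᵀ ∈ ℝ^{(n-1)×(n-1)} have positive real part; in particular Q·L·Qᵀ is nonsingular. -/

import Mathlib

open Polynomial Matrix

lemma my_charpoly_conj {ι : Type*} [Fintype ι] [DecidableEq ι] {R : Type*} [CommRing R]
    (P S A : Matrix ι ι R) (h1 : P * S = 1) (h2 : S * P = 1) :
    (P * A * S).charpoly = A.charpoly := by
  have hPS : (P.map (C : R →+* R[X])) * (S.map (C : R →+* R[X])) = 1 := by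
    rw [← Matrix.map_mul, h1, Matrix.map_one _ (map_zero _) (map_one _)]
  have key : (P * A * S).charmatrix = (P.map C) * A.charmatrix * (S.map C) := by
    unfold Matrix.charmatrix
    rw [mul_sub, sub_mul]
    congr 1
    · rw [scalar_apply, ← Matrix.smul_one_eq_diagonal, Matrix.mul_smul, mul_one,
        Matrix.smul_mul, hPS]
    · simp only [RingHom.mapMatrix_apply]
      rw [← Matrix.map_mul, ← Matrix.map_mul]
  rw [Matrix.charpoly, Matrix.charpoly, key, Matrix.det_mul, Matrix.det_mul]
  have : (P.map (C : R →+* R[X])).det * (S.map (C : R →+* R[X])).det = 1 := by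
    rw [← Matrix.det_mul, hPS, Matrix.det_one]
  calc (P.map (C : R →+* R[X])).det * A.charmatrix.det * (S.map (C : R →+* R[X])).det
      = A.charmatrix.det * ((P.map (C : R →+* R[X])).det * (S.map (C : R →+* R[X])).det) := by ring
    _ = A.charmatrix.det := by rw [this, mul_one]

lemma my_charpoly_zero_one : (0 : Matrix (Fin 1) (Fin 1) ℝ).charpoly = X := by
  simp [Matrix.charpoly, Matrix.det_fin_one, Matrix.charmatrix_apply_eq]

/-- if `L·1ₙ = 0`, `0` is a simple eigenvalue of `L`, and every other
eigenvalue of `L` has positive real part, then all eigenvalues of `Q·L·Qᵀ` have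
positive real part; in particular `Q·L·Qᵀ` is nonsingular. Eigenvalues are the
complex roots of the characteristic polynomial. -/
theorem stmt5 (n : ℕ) (hn : 2 ≤ n)
    (L : Matrix (Fin n) (Fin n) ℝ)
    (hL : L.mulVec (fun _ => (1 : ℝ)) = 0)
    (hsimple : ((L.map (Complex.ofReal)).charpoly).rootMultiplicity 0 = 1)
    (hpos : ∀ μ ∈ ((L.map (Complex.ofReal)).charpoly).roots, μ ≠ 0 → 0 < μ.re)
    (Q : Matrix (Fin (n - 1)) (Fin n) ℝ)
    (hQ1 : Q.mulVec (fun _ => (1 : ℝ)) = 0)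
    (hQQt : Q * Q.transpose = 1)
    (hQtQ : Q.transpose * Q
      = 1 - (1 / (n : ℝ)) • Matrix.of (fun (_ _ : Fin n) => (1 : ℝ))) :
    (∀ μ ∈ (((Q * L * Q.transpose).map (Complex.ofReal)).charpoly).roots, 0 < μ.re)
    ∧ (Q * L * Q.transpose).det ≠ 0 := by
  have hchar : L.charpoly = (Q * L * Q.transpose).charpoly * X := by
    have hm : (n - 1) + 1 = n := by omega
    have hn0 : (n : ℝ) ≠ 0 := ne_of_gt (by exact_mod_cast (by omega : (0:ℕ) < n))
    let e : (Fin (n-1) ⊕ Fin 1) ≃ Fin n := finSumFinEquiv.trans (finCongr hm)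
    let R1 : Matrix (Fin 1) (Fin n) ℝ := Matrix.of fun _ _ => (n : ℝ)⁻¹
    let C1 : Matrix (Fin n) (Fin 1) ℝ := Matrix.of fun _ _ => 1
    let P : Matrix (Fin (n-1) ⊕ Fin 1) (Fin n) ℝ := Matrix.fromRows Q R1
    let S : Matrix (Fin n) (Fin (n-1) ⊕ Fin 1) ℝ := Matrix.fromCols Q.transpose C1
    have hQrow : ∀ i, ∑ j, Q i j = 0 := by
      intro i
      have := congrFun hQ1 i
      simpa [Matrix.mulVec, dotProduct] using this
    have hLrow : ∀ i, ∑ j, L i j = 0 := by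
      intro i
      have := congrFun hL i
      simpa [Matrix.mulVec, dotProduct] using this
    have hQC1 : Q * C1 = 0 := by
      ext i j
      simpa [Matrix.mul_apply, C1] using hQrow i
    have hR1Qt : R1 * Q.transpose = 0 := by
      ext i j
      simp [Matrix.mul_apply, R1, ← Finset.mul_sum, hQrow j]
    have hR1C1 : R1 * C1 = 1 := by
      ext i j
      rw [Subsingleton.elim j i, Matrix.one_apply_eq]
      simp [Matrix.mul_apply, R1, C1, Finset.sum_const, Finset.card_fin, hn0]
    have hPS : P * S = 1 := by
      show Matrix.fromRows Q R1 * Matrix.fromCols Q.transpose C1 = 1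
      rw [Matrix.fromRows_mul_fromCols, hQQt, hQC1, hR1Qt, hR1C1, Matrix.fromBlocks_one]
    have hSP : S * P = 1 := (Matrix.mul_eq_one_comm_of_equiv e).mp hPS
    have hQLC1 : Q * L * C1 = 0 := by
      ext i j
      simp only [Matrix.mul_apply, C1, Matrix.of_apply, mul_one, Matrix.zero_apply]
      rw [Finset.sum_comm]
      simp [← Finset.mul_sum, hLrow]
    have hR1LC1 : R1 * L * C1 = 0 := by
      ext i j
      simp only [Matrix.mul_apply, C1, R1, Matrix.of_apply, mul_one, Matrix.zero_apply]
      rw [Finset.sum_comm]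
      simp [← Finset.mul_sum, hLrow]
    have hPLS : P * L * S = Matrix.fromBlocks (Q * L * Q.transpose) 0
        (R1 * L * Q.transpose) 0 := by
      show Matrix.fromRows Q R1 * L * Matrix.fromCols Q.transpose C1 = _
      rw [Matrix.fromRows_mul, Matrix.fromRows_mul_fromCols, hQLC1, hR1LC1]
    -- square versions
    let P' : Matrix (Fin n) (Fin n) ℝ := P.submatrix e.symm (Equiv.refl (Fin n))
    let S' : Matrix (Fin n) (Fin n) ℝ := S.submatrix (Equiv.refl (Fin n)) e.symm
    have hP'S' : P' * S' = 1 := by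
      show P.submatrix e.symm (Equiv.refl (Fin n)) * S.submatrix (Equiv.refl (Fin n)) e.symm = 1
      rw [Matrix.submatrix_mul_equiv P S e.symm (Equiv.refl (Fin n)) e.symm, hPS,
        Matrix.submatrix_one_equiv]
    have hS'P' : S' * P' = 1 := by
      show S.submatrix (Equiv.refl (Fin n)) e.symm * P.submatrix e.symm (Equiv.refl (Fin n)) = 1
      rw [Matrix.submatrix_mul_equiv S P (Equiv.refl (Fin n)) e.symm (Equiv.refl (Fin n)), hSP]
      simp
    have hconj : (P' * L * S').charpoly = L.charpoly := by
      have hL' : L = L.submatrix (Equiv.refl (Fin n)) (Equiv.refl (Fin n)) := by simp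
      exact my_charpoly_conj P' S' L hP'S' hS'P'
    have hPLS' : P' * L * S' = (P * L * S).submatrix e.symm e.symm := by
      show P.submatrix e.symm (Equiv.refl (Fin n)) * L * S.submatrix (Equiv.refl (Fin n)) e.symm = _
      conv_lhs => rw [show L = L.submatrix (Equiv.refl (Fin n)) (Equiv.refl (Fin n)) by simp]
      rw [Matrix.submatrix_mul_equiv P L e.symm (Equiv.refl (Fin n)) (Equiv.refl (Fin n)),
        Matrix.submatrix_mul_equiv (P * L) S e.symm (Equiv.refl (Fin n)) e.symm]
    rw [← hconj, hPLS', show (P * L * S).submatrix e.symm e.symm = Matrix.reindex e e (P * L * S)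
      from rfl, Matrix.charpoly_reindex, hPLS, Matrix.charpoly_fromBlocks_zero₁₂,
      my_charpoly_zero_one]

  set p : ℂ[X] := ((Q * L * Q.transpose).map (Complex.ofReal)).charpoly with hp
  have hofReal : (Complex.ofReal : ℝ → ℂ) = ⇑Complex.ofRealHom := rfl
  have hmap : (L.map (Complex.ofReal)).charpoly = p * X := by
    rw [hp, hofReal, Matrix.charpoly_map, Matrix.charpoly_map, hchar, Polynomial.map_mul,
      Polynomial.map_X]
  have hp0 : p ≠ 0 := (Matrix.charpoly_monic _).ne_zero
  have hpX0 : p * X ≠ 0 := mul_ne_zero hp0 X_ne_zero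
  have hnot : (0 : ℂ) ∉ p.roots := by
    have h1 : p.rootMultiplicity 0 + (X : ℂ[X]).rootMultiplicity 0 = 1 := by
      rw [← Polynomial.rootMultiplicity_mul hpX0, ← hmap, hsimple]
    have hX : (X : ℂ[X]).rootMultiplicity 0 = 1 := by
      have : (X : ℂ[X]) = X - C 0 := by simp
      rw [this, Polynomial.rootMultiplicity_X_sub_C_self]
    rw [hX] at h1
    have h2 : p.rootMultiplicity 0 = 0 := by omega
    rw [← Polynomial.count_roots] at h2
    exact Multiset.count_eq_zero.mp h2
  constructor
  · intro μ hμ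
    have hmem : μ ∈ (L.map (Complex.ofReal)).charpoly.roots := by
      rw [hmap, Polynomial.roots_mul hpX0]
      exact Multiset.mem_add.mpr (Or.inl hμ)
    exact hpos μ hmem (fun h => hnot (h ▸ hμ))
  · intro hdet
    have hcd : ((Q * L * Q.transpose).map (Complex.ofReal)).det = 0 := by
      rw [hofReal, ← RingHom.mapMatrix_apply, ← RingHom.map_det, hdet, map_zero]
    rw [Matrix.det_eq_sign_charpoly_coeff, ← hp] at hcd
    have hc0 : p.coeff 0 = 0 := by
      rcases mul_eq_zero.mp hcd with h | h
      · exact absurd h (pow_ne_zero _ (by norm_num))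
      · exact h
    exact hnot (Polynomial.mem_roots hp0 |>.mpr
      (by rw [Polynomial.IsRoot, ← Polynomial.coeff_zero_eq_eval_zero]; exact hc0))
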